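/- arXiv:1711.03615 — 3 statements merged into one kernel-verified Lean document; each statement's English description precedes it below -/
import Mathlib

section
/- For every real x, |cos x| ≤ 1 − 2·‖x/π‖² ≤ exp(−2·‖x/π‖²), where ‖y‖ denotes the distance from y to the nearest integer. -/
open Real

/-- Distance from a real number to the nearest integer. -/
noncomputable def intDist (y : ℝ) : ℝ := ⨅ N : ℤ, |y - (N : ℝ)|

theorem abs_cos_le_one_sub_sq_le_exp (x : ℝ) :
    |Real.cos x| ≤ 1 - 2 * (intDist (x / π)) ^ 2 ∧
      1 - 2 * (intDist (x / π)) ^ 2 ≤ Real.exp (-(2 * (intDist (x / π)) ^ 2)) := by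
  have hπ : (0:ℝ) < π := Real.pi_pos
  set y : ℝ := x / π with hy
  set n : ℤ := round y with hn
  set t : ℝ := y - n with ht
  have htle : |t| ≤ 1 / 2 := abs_sub_round y
  have hd0 : 0 ≤ intDist y := Real.iInf_nonneg fun N => abs_nonneg _
  have hdle : intDist y ≤ |t| := by
    refine ciInf_le ⟨0, ?_⟩ n
    rintro z ⟨N, rfl⟩
    exact abs_nonneg _
  have hd2 : intDist y ^ 2 ≤ t ^ 2 := by
    have := sq_le_sq' (by linarith [abs_nonneg t, neg_abs_le t]) hdle
    simpa [sq_abs] using this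
  have hx : x = π * t + n * π := by
    have : x = π * y := by rw [hy]; field_simp
    rw [this, ht]; ring
  have hcos : |Real.cos x| = |Real.cos (π * t)| := by
    rw [hx, Real.cos_add_int_mul_pi, abs_mul]
    rcases Int.even_or_odd n with h | h
    · rw [h.neg_one_zpow]; simp
    · rw [h.neg_one_zpow]; simp
  have habs : |π * t| ≤ π / 2 := by
    rw [abs_mul, abs_of_pos hπ]
    nlinarith
  have ht1 : -(1/2 : ℝ) ≤ t := by linarith [neg_abs_le t]
  have ht2 : t ≤ 1/2 := le_trans (le_abs_self t) htle
  have hnonneg : 0 ≤ Real.cos (π * t) :=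
    Real.cos_nonneg_of_mem_Icc ⟨by nlinarith, by nlinarith⟩
  have hbound : Real.cos (π * t) ≤ 1 - 2 * t ^ 2 := by
    have h := Real.cos_le_one_sub_mul_cos_sq (x := π * t) (by linarith)
    have hπ2 : (2 / π ^ 2) * (π * t) ^ 2 = 2 * t ^ 2 := by
      field_simp
    linarith [h, hπ2.symm ▸ h]
  have h1 : |Real.cos x| ≤ 1 - 2 * intDist y ^ 2 := by
    rw [hcos, abs_of_nonneg hnonneg]
    nlinarith
  refine ⟨h1, ?_⟩
  have := Real.add_one_le_exp (-(2 * intDist y ^ 2))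
  linarith
end

section
/- Let f be analytic on an open set containing the closed disk B̄(z, R), and let 0 < r < R. If N(B(z,r)) denotes the number of zeros of f in the open disk B(z, r) counted with multiplicity, M := max_{w ∈ B̄(z,R)} |f(w)|, and m := max_{w ∈ B̄(z,r)} |f(w)| with m > 0, then N(B(z, r)) ≤ log(M/m) / log((R² + r²)/(2Rr)). -/
open Real Complex Metric Topology

lemma key_real (r R q1 q2 p : ℝ) (hr : 0 < r) (hrR : r < R) (h1 : 0 ≤ q1) (h2 : 0 ≤ q2)
    (hq1 : q1 ≤ r) (hq2 : q2 ≤ r) (hp : -(q1*q2) ≤ p) :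
    (R^2+r^2)^2 * (q1^2 + q2^2 - 2*p) ≤ (2*r)^2 * (R^4 - 2*R^2*p + q1^2*q2^2) := by
  have hB2 : (0:ℝ) ≤ 2*r*(R^2+q1*q2) + (R^2+r^2)*(q1+q2) := by
    nlinarith [mul_nonneg h1 h2, sq_nonneg R, sq_nonneg r]
  nlinarith [mul_nonneg (mul_nonneg (sub_nonneg.mpr hq1)
      (by nlinarith : (0:ℝ) ≤ R^2 + r^2 - 2*r*q2)) hB2,
    mul_nonneg (mul_nonneg (sub_nonneg.mpr hq2) (by nlinarith : (0:ℝ) ≤ R^2 - r^2)) hB2,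
    mul_nonneg (by linarith : (0:ℝ) ≤ p + q1*q2) (sq_nonneg (R^2 - r^2))]

lemma key_cx (r R : ℝ) (hr : 0 < r) (hrR : r < R) (u v : ℂ)
    (hu : ‖u‖ ≤ r) (hv : ‖v‖ ≤ r) :
    (R^2+r^2) * ‖u - v‖ ≤ (2*r) * ‖(R:ℂ)^2 - (starRingEnd ℂ) v * u‖ := by
  have hR : (0:ℝ) < R := hr.trans hrR
  have h1 : 0 ≤ ‖u‖ := norm_nonneg u
  have h2 : 0 ≤ ‖v‖ := norm_nonneg v
  set q1 := ‖u‖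
  set q2 := ‖v‖
  set p := ((starRingEnd ℂ) v * u).re with hpdef
  have habs : |((starRingEnd ℂ) v * u).re| ≤ q2 * q1 := by
    have := Complex.abs_re_le_norm ((starRingEnd ℂ) v * u)
    rwa [norm_mul, Complex.norm_conj] at this
  have hp : -(q1*q2) ≤ p := by
    have h4 := neg_abs_le ((starRingEnd ℂ) v * u).re
    have h5 : q1 * q2 = q2 * q1 := mul_comm _ _
    rw [hpdef]; linarith
  have hq1c : q1^2 = u.re^2 + u.im^2 := by
    rw [Complex.sq_norm, Complex.normSq_apply]; ring
  have hq2c : q2^2 = v.re^2 + v.im^2 := by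
    rw [Complex.sq_norm, Complex.normSq_apply]; ring
  have hsq1 : ‖u - v‖ ^ 2 = q1^2 + q2^2 - 2*p := by
    rw [Complex.sq_norm, Complex.normSq_apply, hq1c, hq2c, hpdef]
    simp [Complex.sub_re, Complex.sub_im, Complex.mul_re, Complex.conj_re, Complex.conj_im]
    ring
  have hsq2 : ‖(R:ℂ)^2 - (starRingEnd ℂ) v * u‖ ^ 2
      = R^4 - 2*R^2*p + q1^2*q2^2 := by
    rw [Complex.sq_norm, Complex.normSq_apply, hq1c, hq2c, hpdef]
    simp [Complex.sub_re, Complex.sub_im, Complex.mul_re, Complex.mul_im, Complex.conj_re,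
      Complex.conj_im, ← Complex.ofReal_pow, Complex.ofReal_re, Complex.ofReal_im]
    ring
  have key := key_real r R q1 q2 p hr hrR h1 h2 hu hv hp
  rw [← hsq1, ← hsq2] at key
  have key' : ((R^2+r^2) * ‖u - v‖)^2
      ≤ ((2*r) * ‖(R:ℂ)^2 - (starRingEnd ℂ) v * u‖)^2 := by
    rw [mul_pow, mul_pow]; exact key
  exact le_of_pow_le_pow_left₀ two_ne_zero (by positivity) key'

lemma extract_zero {U : Set ℂ} (hU : IsOpen U) {f : ℂ → ℂ} (hf : AnalyticOnNhd ℂ f U)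
    {a : ℂ} (ha : a ∈ U) (n : ℕ) (hn : (n : ℕ∞) ≤ analyticOrderAt f a) :
    ∃ g : ℂ → ℂ, AnalyticOnNhd ℂ g U ∧ ∀ w ∈ U, f w = (w - a) ^ n * g w := by
  obtain ⟨c, k, hk, hek, hfa⟩ :
      ∃ (c : ℂ) (k : ℂ → ℂ), AnalyticAt ℂ k a ∧
        (∀ᶠ w in 𝓝 a, Function.update (fun w => f w / (w - a) ^ n) a c w = k w) ∧
        f a = (0:ℂ) ^ n * c := by
    rcases eq_or_ne (analyticOrderAt f a) ⊤ with htop | hne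
    · have hzero : ∀ᶠ w in 𝓝 a, f w = 0 := (analyticOrderAt_eq_top (f := f) (z₀ := a)).mp htop
      refine ⟨0, 0, analyticAt_const, ?_, by simpa using hzero.self_of_nhds⟩
      filter_upwards [hzero] with w hw
      by_cases hwa : w = a
      · subst hwa; simp
      · simp [Function.update_of_ne hwa, hw]
    · obtain ⟨m, hm⟩ := WithTop.ne_top_iff_exists.mp hne
      have hnm : n ≤ m := by
        rw [← hm] at hn; exact Nat.cast_le.mp hn
      obtain ⟨h, hh, hh0, hhe⟩ := ((hf a ha).analyticOrderAt_eq_natCast (n := m)).mp hm.symm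
      refine ⟨if n = m then h a else 0, fun w => (w - a) ^ (m - n) * h w,
        ((analyticAt_id.sub analyticAt_const).pow _).mul hh, ?_, ?_⟩
      · filter_upwards [hhe] with w hw
        by_cases hwa : w = a
        · subst hwa
          by_cases hnm' : n = m
          · simp [hnm', Function.update_self]
          · have : m - n ≠ 0 := by omega
            simp [hnm', Function.update_self, zero_pow this]
        · have hne0 : (w - a) ^ n ≠ 0 := pow_ne_zero _ (sub_ne_zero.mpr hwa)
          rw [Function.update_of_ne hwa]
          rw [hw, smul_eq_mul]
          field_simp
          rw [mul_assoc, ← pow_add, Nat.add_sub_cancel' hnm, mul_comm]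
      · have hfa := hhe.self_of_nhds
        simp only [sub_self, smul_eq_mul] at hfa
        by_cases hn0 : n = 0
        · subst hn0
          by_cases hm0 : m = 0
          · subst hm0; simpa using hfa
          · simp only [pow_zero, one_mul] at hfa ⊢
            rw [zero_pow hm0, zero_mul] at hfa
            rw [hfa, if_neg (by omega : ¬ (0:ℕ) = m)]
        · rw [zero_pow hn0, zero_mul, hfa, zero_pow (by omega : m ≠ 0), zero_mul]
  refine ⟨Function.update (fun w => f w / (w - a) ^ n) a c, ?_, ?_⟩
  · intro w hw
    by_cases hwa : w = a
    · subst hwa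
      exact hk.congr (by filter_upwards [hek] with w hw using hw.symm)
    · have hev : ∀ᶠ w' in 𝓝 w, w' ≠ a := eventually_ne_nhds hwa
      have : AnalyticAt ℂ (fun w' => f w' / (w' - a) ^ n) w :=
        (hf w hw).div ((analyticAt_id.sub analyticAt_const).pow _)
          (pow_ne_zero _ (sub_ne_zero.mpr hwa))
      exact this.congr (by filter_upwards [hev] with w' hw'; simp [Function.update_of_ne hw'])
  · intro w hw
    by_cases hwa : w = a
    · subst hwa; simpa [Function.update_self] using hfa
    · rw [Function.update_of_ne hwa]
      rw [mul_div_cancel₀ _ (pow_ne_zero _ (sub_ne_zero.mpr hwa))]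

lemma order_le_of_factor {f g e : ℂ → ℂ} {b : ℂ} (hf : AnalyticAt ℂ f b)
    (hg : AnalyticAt ℂ g b) (he : AnalyticAt ℂ e b) (he0 : e b ≠ 0)
    (hfe : ∀ᶠ w in 𝓝 b, f w = e w * g w) : analyticOrderAt f b ≤ analyticOrderAt g b := by
  rcases eq_or_ne (analyticOrderAt g b) ⊤ with htop | hne
  · exact htop ▸ le_top
  · obtain ⟨m, hm⟩ := WithTop.ne_top_iff_exists.mp hne
    obtain ⟨h, hh, hh0, hhe⟩ := (hg.analyticOrderAt_eq_natCast (n := m)).mp hm.symm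
    have : analyticOrderAt f b = m := by
      rw [hf.analyticOrderAt_eq_natCast]
      refine ⟨fun w => e w * h w, he.mul hh, mul_ne_zero he0 hh0, ?_⟩
      filter_upwards [hfe, hhe] with w h1 h2
      rw [h1, h2]
      simp [smul_eq_mul]; ring
    rw [this, ← hm]
    exact le_refl _

lemma factor_out {U : Set ℂ} (hU : IsOpen U) (ord : ℂ → ℕ) (t : Finset ℂ) :
    ∀ (f : ℂ → ℂ) (hf : AnalyticOnNhd ℂ f U),
      (∀ a ∈ t, ∃ ha : a ∈ U, (ord a : ℕ∞) ≤ analyticOrderAt f a) →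
      ∃ g : ℂ → ℂ, AnalyticOnNhd ℂ g U ∧
        ∀ w ∈ U, f w = (∏ a ∈ t, (w - a) ^ ord a) * g w := by
  induction t using Finset.induction_on with
  | empty => intro f hf _; exact ⟨f, hf, by simp⟩
  | insert _ _ hat _ =>
    rename_i a t' ih
    intro f hf hcond
    obtain ⟨ha, horda⟩ := hcond a (Finset.mem_insert_self a t')
    obtain ⟨g₁, hg₁, he₁⟩ := extract_zero hU hf ha (ord a) horda
    have hcond' : ∀ b ∈ t', ∃ hb : b ∈ U, (ord b : ℕ∞) ≤ analyticOrderAt g₁ b := by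
      intro b hb
      obtain ⟨hbU, hordb⟩ := hcond b (Finset.mem_insert_of_mem hb)
      refine ⟨hbU, le_trans hordb ?_⟩
      have hba : b ≠ a := fun h => hat (h ▸ hb)
      refine order_le_of_factor (hf b hbU) (hg₁ b hbU)
        ((analyticAt_id.sub analyticAt_const).pow (ord a))
        (pow_ne_zero _ (sub_ne_zero.mpr hba)) ?_
      filter_upwards [hU.mem_nhds hbU] with w hw using he₁ w hw
    obtain ⟨g, hg, he⟩ := ih g₁ hg₁ hcond'
    refine ⟨g, hg, fun w hw => ?_⟩
    rw [Finset.prod_insert hat, mul_assoc, ← he w hw, ← he₁ w hw]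

/-- Quantitative Jensen inequality: the number of zeros (with multiplicity) of an
analytic function in `B(z, r)` is at most `log(M/m) / log((R²+r²)/(2Rr))`. -/
theorem jensen_zero_count (f : ℂ → ℂ) (z : ℂ) (r R : ℝ) (hr : 0 < r) (hrR : r < R)
    (U : Set ℂ) (hU : IsOpen U) (hsub : closedBall z R ⊆ U)
    (hf : AnalyticOnNhd ℂ f U)
    (M m : ℝ)
    (hM : M = sSup ((fun w => ‖f w‖) '' closedBall z R))
    (hm : m = sSup ((fun w => ‖f w‖) '' closedBall z r))
    (hm0 : 0 < m)
    (ord : ℂ → ℕ)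
    (hord : ∀ w (hw : w ∈ U), (ord w : ℕ∞) = analyticOrderAt f w)
    (s : Finset ℂ)
    (hs : ∀ w : ℂ, w ∈ s ↔ w ∈ ball z r ∧ f w = 0) :
    ((∑ w ∈ s, ord w : ℕ) : ℝ) ≤ Real.log (M / m) / Real.log ((R ^ 2 + r ^ 2) / (2 * R * r)) := by
  have hR : (0:ℝ) < R := hr.trans hrR
  set c : ℝ := (R ^ 2 + r ^ 2) / (2 * R * r) with hc
  have hc1 : 1 < c := by
    rw [hc, lt_div_iff₀ (by positivity)]
    nlinarith [sq_nonneg (R - r)]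
  have hc0 : 0 < c := lt_trans one_pos hc1
  set N : ℕ := ∑ w ∈ s, ord w with hN
  -- continuity and sup facts
  have hcont : ContinuousOn (fun w => ‖f w‖) (closedBall z R) :=
    continuous_norm.comp_continuousOn ((hf.continuousOn).mono hsub)
  have hrR' : closedBall z r ⊆ closedBall z R := closedBall_subset_closedBall hrR.le
  have hMb : ∀ w ∈ closedBall z R, ‖f w‖ ≤ M := by
    intro w hw
    rw [hM]
    exact le_csSup ((isCompact_closedBall z R).bddAbove_image hcont) ⟨w, hw, rfl⟩
  obtain ⟨w₀, hw₀, hmax⟩ := (isCompact_closedBall z r).exists_isMaxOn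
    (nonempty_closedBall.mpr hr.le) (hcont.mono hrR')
  have hmw₀ : ‖f w₀‖ = m := by
    rw [hm]
    apply le_antisymm
    · exact le_csSup ((isCompact_closedBall z r).bddAbove_image (hcont.mono hrR')) ⟨w₀, hw₀, rfl⟩
    · exact csSup_le (Set.Nonempty.image _ ⟨z, mem_closedBall_self hr.le⟩)
        (by rintro x ⟨w, hw, rfl⟩; exact hmax hw)
  have hballU : ball z r ⊆ U := (ball_subset_closedBall.trans hrR').trans hsub
  -- factorization
  have hcond : ∀ a ∈ s, ∃ ha : a ∈ U, (ord a : ℕ∞) ≤ analyticOrderAt f a := by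
    intro a haa
    obtain ⟨hab, _⟩ := (hs a).mp haa
    exact ⟨hballU hab, le_of_eq (hord a (hballU hab))⟩
  obtain ⟨g, hg, hfac⟩ := factor_out hU ord s f hf hcond
  -- auxiliary functions
  set Q : ℂ → ℂ → ℂ := fun a w => ((R:ℂ)^2 - (starRingEnd ℂ) (a - z) * (w - z)) / R with hQ
  set F : ℂ → ℂ := fun w => g w * ∏ a ∈ s, Q a w ^ ord a with hF
  have hRne : (R:ℂ) ≠ 0 := Complex.ofReal_ne_zero.mpr hR.ne'
  have hFanal : AnalyticOnNhd ℂ F U := by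
    intro w hw
    refine (hg w hw).mul (Finset.analyticAt_fun_prod s fun a _ => ?_)
    exact ((analyticAt_const.sub (analyticAt_const.mul
      (analyticAt_id.sub analyticAt_const))).div analyticAt_const hRne).pow _
  -- |Q a w| on the sphere equals |w - a|
  have hQsphere : ∀ w ∈ sphere z R, ∀ a : ℂ, ‖Q a w‖ = ‖w - a‖ := by
    intro w hw a
    have hwz : ‖w - z‖ = R := by
      rw [mem_sphere_iff_norm] at hw
      exact hw
    have h2 : (starRingEnd ℂ) (w - z) * (w - z) = ((R:ℂ))^2 := by
      rw [mul_comm, Complex.mul_conj, ← Complex.sq_norm, hwz]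
      push_cast
      ring
    have hkey : (R:ℂ)^2 - (starRingEnd ℂ) (a - z) * (w - z)
        = (starRingEnd ℂ) ((w - z) - (a - z)) * (w - z) := by
      rw [map_sub (starRingEnd ℂ) (w - z) (a - z), sub_mul, h2]
    simp only [hQ]
    rw [norm_div, hkey, norm_mul, Complex.norm_conj, hwz, Complex.norm_real, Real.norm_eq_abs, abs_of_pos hR,
      sub_sub_sub_cancel_right, mul_div_assoc, div_self hR.ne', mul_one]
  -- boundary bound
  have hFb : ∀ w ∈ sphere z R, ‖F w‖ ≤ M := by
    intro w hw
    have hwU : w ∈ U := hsub (sphere_subset_closedBall hw)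
    have h1 : ‖F w‖ = ‖g w‖ * ∏ a ∈ s, ‖w - a‖ ^ ord a := by
      simp only [hF, norm_mul, norm_prod, norm_pow]
      congr 1
      exact Finset.prod_congr rfl fun a _ => by rw [hQsphere w hw a]
    have h2 : ‖f w‖ = (∏ a ∈ s, ‖w - a‖ ^ ord a) * ‖g w‖ := by
      rw [hfac w hwU, norm_mul, norm_prod]
      simp only [norm_pow]
    have : ‖F w‖ = ‖f w‖ := by rw [h1, h2, mul_comm]
    rw [this]
    exact hMb w (sphere_subset_closedBall hw)
  -- maximum principle
  have hw₀U : w₀ ∈ U := hsub (hrR' hw₀)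
  have hFw₀ : ‖F w₀‖ ≤ M := by
    apply Complex.norm_le_of_forall_mem_frontier_norm_le isBounded_ball
    · constructor
      · exact (hFanal.differentiableOn).mono (ball_subset_closedBall.trans hsub)
      · rw [closure_ball z hR.ne']
        exact (hFanal.continuousOn).mono hsub
    · intro w hw
      rw [frontier_ball z hR.ne'] at hw
      exact hFb w hw
    · rw [closure_ball z hR.ne']
      exact hrR' hw₀
  -- lower bound at w₀
  have hfw₀ : f w₀ = (∏ a ∈ s, (w₀ - a) ^ ord a) * g w₀ := hfac w₀ hw₀U
  have hQlow : ∀ a ∈ s, c * ‖w₀ - a‖ ≤ ‖Q a w₀‖ := by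
    intro a haa
    obtain ⟨hab, _⟩ := (hs a).mp haa
    have hu : ‖w₀ - z‖ ≤ r := by
      rw [mem_closedBall_iff_norm] at hw₀; exact hw₀
    have hv : ‖a - z‖ ≤ r := by
      rw [mem_ball_iff_norm] at hab; exact hab.le
    have hkey := key_cx r R hr hrR (w₀ - z) (a - z) hu hv
    rw [sub_sub_sub_cancel_right] at hkey
    have habsQ : ‖Q a w₀‖
        = ‖(R:ℂ)^2 - (starRingEnd ℂ) (a - z) * (w₀ - z)‖ / R := by
      simp only [hQ]
      rw [norm_div, Complex.norm_real, Real.norm_eq_abs, abs_of_pos hR]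
    rw [habsQ, hc, div_mul_eq_mul_div, div_le_div_iff₀ (by positivity) hR]
    nlinarith [mul_le_mul_of_nonneg_right hkey hR.le]
  have hm' : m = (∏ a ∈ s, ‖w₀ - a‖ ^ ord a) * ‖g w₀‖ := by
    rw [← hmw₀, hfw₀, norm_mul, norm_prod]
    simp only [norm_pow]
  have hprod : m * c ^ N ≤ ‖F w₀‖ := by
    have hFabs : ‖F w₀‖
        = (∏ a ∈ s, ‖Q a w₀‖ ^ ord a) * ‖g w₀‖ := by
      simp only [hF, norm_mul, norm_prod, norm_pow]
      ring
    have hstep : ∏ a ∈ s, (c * ‖w₀ - a‖) ^ ord a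
        ≤ ∏ a ∈ s, ‖Q a w₀‖ ^ ord a :=
      Finset.prod_le_prod (fun a _ => by positivity)
        (fun a haa => pow_le_pow_left₀ (by positivity) (hQlow a haa) _)
    have hleft : ∏ a ∈ s, (c * ‖w₀ - a‖) ^ ord a
        = c ^ N * ∏ a ∈ s, ‖w₀ - a‖ ^ ord a := by
      simp_rw [mul_pow]
      rw [Finset.prod_mul_distrib, Finset.prod_pow_eq_pow_sum]
    have h3 : m * c ^ N = (∏ a ∈ s, (c * ‖w₀ - a‖) ^ ord a) * ‖g w₀‖ := by
      rw [hm', hleft]; ring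
    rw [h3, hFabs]
    exact mul_le_mul_of_nonneg_right hstep (norm_nonneg _)
  -- combine
  have hMpos : 0 < M := lt_of_lt_of_le hm0 (by rw [← hmw₀]; exact hMb w₀ (hrR' hw₀))
  have hfinal : m * c ^ N ≤ M := le_trans hprod (by exact hFw₀)
  have hlogc : 0 < Real.log c := Real.log_pos hc1
  rw [le_div_iff₀ hlogc, Real.log_div hMpos.ne' hm0.ne']
  have hlog := Real.log_le_log (by positivity) hfinal
  rw [Real.log_mul hm0.ne' (by positivity), Real.log_pow] at hlog
  linarith
end

section
/- For |z| > 2 let x := ⌊|z|² − 1⌋ and S(z) := ∑_{i=0}^{∞} |z|^i/√(i!). Then S(z) ≤ 100·|z|²·e^{|z|²/2} for all |z| sufficiently large. -/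
open Real Complex

lemma sqrt_mul_le_half_add {x y : ℝ} (hx : 0 ≤ x) (hy : 0 ≤ y) :
    Real.sqrt (x * y) ≤ (x + y) / 2 := by
  have h : x * y ≤ ((x + y) / 2) ^ 2 := by nlinarith [sq_nonneg (x - y)]
  calc Real.sqrt (x * y) ≤ Real.sqrt (((x + y) / 2) ^ 2) := Real.sqrt_le_sqrt h
    _ = (x + y) / 2 := Real.sqrt_sq (by linarith)

lemma exp_tsum (x : ℝ) : (∑' n : ℕ, x ^ n / n.factorial) = Real.exp x := by
  rw [Real.exp_eq_exp_ℝ, NormedSpace.exp_eq_tsum_div]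

theorem flat_sum_bound :
    ∃ R : ℝ, ∀ z : ℂ, R ≤ ‖z‖ →
      (∑' i : ℕ, (‖z‖) ^ i / Real.sqrt (Nat.factorial i))
        ≤ 100 * (‖z‖) ^ 2 * Real.exp ((‖z‖) ^ 2 / 2) := by
  use 2
  intro z hz
  set r : ℝ := ‖z‖ with hr
  have hr2 : (2:ℝ) ≤ r := hz
  have hr0 : (0:ℝ) < r := by linarith
  have hrsq : (0:ℝ) < r ^ 2 := by positivity
  set t : ℝ := 1 + 2 / r ^ 2 with ht
  set u : ℝ := r ^ 2 / 2 + 1 with hu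
  have ht1 : 1 < t := by
    have h : 0 < 2 / r ^ 2 := by positivity
    simp only [ht]; linarith
  have ht0 : 0 < t := by linarith
  have htr : t * r ^ 2 = r ^ 2 + 2 := by
    rw [ht, add_mul, div_mul_cancel₀ _ hrsq.ne', one_mul]
  -- pointwise bound
  have key : ∀ i : ℕ, r ^ i / Real.sqrt (Nat.factorial i)
      ≤ ((t * r ^ 2) ^ i / (Nat.factorial i) * Real.exp (-u)
        + Real.exp u * (1 / t) ^ i) / 2 := by
    intro i
    have hfac : (0:ℝ) < (Nat.factorial i : ℝ) := by positivity
    set a : ℝ := (t * r ^ 2) ^ i / (Nat.factorial i) * Real.exp (-u) with ha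
    set b : ℝ := Real.exp u * (1 / t) ^ i with hb
    have ha0 : 0 ≤ a := by positivity
    have hb0 : 0 ≤ b := by positivity
    have hab : a * b = r ^ (2 * i) / (Nat.factorial i) := by
      rw [ha, hb]
      have hpow : (t * r ^ 2) ^ i * (1 / t) ^ i = r ^ (2 * i) := by
        rw [← mul_pow, show t * r ^ 2 * (1 / t) = r ^ 2 by field_simp, ← pow_mul]
      have hexp : Real.exp (-u) * Real.exp u = 1 := by
        rw [← Real.exp_add]; simp
      calc (t * r ^ 2) ^ i / ↑(Nat.factorial i) * Real.exp (-u) *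
            (Real.exp u * (1 / t) ^ i)
          = ((t * r ^ 2) ^ i * (1 / t) ^ i) / ↑(Nat.factorial i)
              * (Real.exp (-u) * Real.exp u) := by ring
        _ = r ^ (2 * i) / ↑(Nat.factorial i) := by rw [hpow, hexp, mul_one]
    have hlhs : r ^ i / Real.sqrt (Nat.factorial i) = Real.sqrt (a * b) := by
      rw [hab, Real.sqrt_div (by positivity), show 2 * i = i * 2 from mul_comm 2 i,
        pow_mul, Real.sqrt_sq (by positivity)]
    rw [hlhs]
    exact sqrt_mul_le_half_add ha0 hb0
  -- summability
  have h1 : Summable (fun i : ℕ => (t * r ^ 2) ^ i / (Nat.factorial i : ℝ)) :=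
    Real.summable_pow_div_factorial _
  have hlt : 1 / t < 1 := by
    rw [div_lt_one ht0]; linarith
  have h2 : Summable (fun i : ℕ => (1 / t) ^ i) :=
    summable_geometric_of_lt_one (by positivity) hlt
  have hmaj : Summable (fun i : ℕ => ((t * r ^ 2) ^ i / (Nat.factorial i) * Real.exp (-u)
      + Real.exp u * (1 / t) ^ i) / 2) :=
    ((h1.mul_right _).add (h2.mul_left _)).div_const 2
  have hS : Summable (fun i : ℕ => r ^ i / Real.sqrt (Nat.factorial i)) := by
    apply hmaj.of_nonneg_of_le (fun i => by positivity) key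
  have hle := Summable.tsum_le_tsum key hS hmaj
  -- compute tsum of majorant
  have hcalc : (∑' i : ℕ, ((t * r ^ 2) ^ i / (Nat.factorial i) * Real.exp (-u)
      + Real.exp u * (1 / t) ^ i) / 2)
      = (Real.exp (t * r ^ 2) * Real.exp (-u) + Real.exp u * (1 - 1 / t)⁻¹) / 2 := by
    rw [tsum_div_const, Summable.tsum_add (h1.mul_right _) (h2.mul_left _),
      tsum_mul_right, tsum_mul_left, exp_tsum,
      tsum_geometric_of_lt_one (by positivity) hlt]
  rw [hcalc] at hle
  refine hle.trans ?_
  -- final arithmetic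
  have h3 : Real.exp (t * r ^ 2) * Real.exp (-u) = Real.exp 1 * Real.exp (r ^ 2 / 2) := by
    rw [← Real.exp_add, ← Real.exp_add, htr, hu]; ring_nf
  have h4 : Real.exp u = Real.exp 1 * Real.exp (r ^ 2 / 2) := by
    rw [hu, show r ^ 2 / 2 + 1 = 1 + r ^ 2 / 2 by ring, Real.exp_add]
  have h5 : (1 - 1 / t)⁻¹ = (r ^ 2 + 2) / 2 := by
    rw [ht]
    rw [show (1 : ℝ) - 1 / (1 + 2 / r ^ 2) = 2 / (r ^ 2 + 2) by
      field_simp; ring]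
    rw [inv_div]
  rw [h3, h4, h5]
  have he : Real.exp 1 < 3 := by
    have := Real.exp_one_lt_d9
    linarith
  have hexp : 0 < Real.exp (r ^ 2 / 2) := Real.exp_pos _
  have he0 : 0 < Real.exp 1 := Real.exp_pos _
  have hE : Real.exp 1 * Real.exp (r ^ 2 / 2) ≤ 3 * Real.exp (r ^ 2 / 2) :=
    mul_le_mul_of_nonneg_right he.le hexp.le
  have h7 : (4:ℝ) ≤ r ^ 2 := by nlinarith
  nlinarith [mul_le_mul_of_nonneg_right hE (show (0:ℝ) ≤ (r ^ 2 + 4) / 4 by positivity),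
    mul_le_mul_of_nonneg_left h7 hexp.le, hexp.le, mul_pos he0 hexp]
end
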